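/- Let L and M be complete lattices and let f : L → M be an injective function preserving arbitrary suprema. Then there exist a complete lattice N and a function h : M → N preserving arbitrary suprema such that the range of f equals {x ∈ M | h x = ⊥}, if and only if the range of f is a lower set of M (i.e. downward closed). -/

import Mathlib

universe u v

/-- a monomorphism of suplattices (an injective sup-preserving map between
complete lattices) is normal — i.e. it occurs as the kernel of some sup-preserving map —
if and only if its range is downward closed. -/
theorem normal_mono_iff_range_lowerSet {L : Type u} {M : Type v}
    [CompleteLattice L] [CompleteLattice M]
    (f : L → M) (hinj : Function.Injective f)
    (hsup : ∀ S : Set L, f (sSup S) = sSup (f '' S)) :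
    (∃ (N : Type v) (_ : CompleteLattice N) (h : M → N),
      (∀ S : Set M, h (sSup S) = sSup (h '' S)) ∧
      Set.range f = {x : M | h x = ⊥}) ↔
    IsLowerSet (Set.range f) := by
  constructor
  · rintro ⟨N, _, h, hsupN, hker⟩
    have hmono : Monotone h := by
      intro a b hab
      have := hsupN {a, b}
      rw [Set.image_pair, sSup_pair, sSup_pair, sup_eq_right.mpr hab] at this
      rw [this]
      exact le_sup_left
    intro x y hyx hx
    have hx' : h x = ⊥ := by rw [hker] at hx; exact hx
    have : h y = ⊥ := le_bot_iff.mp (hx' ▸ hmono hyx)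
    rw [hker]; exact this
  · intro hlow
    have hmono : Monotone f := by
      intro a b hab
      have := hsup {a, b}
      rw [Set.image_pair, sSup_pair, sSup_pair, sup_eq_right.mpr hab] at this
      rw [this]; exact le_sup_left
    set m := f ⊤ with hm
    have hrange : Set.range f = Set.Iic m := by
      ext x
      constructor
      · rintro ⟨l, rfl⟩; exact hmono le_top
      · intro hx; exact hlow hx ⟨⊤, rfl⟩
    letI iS : SupSet (Set.Ici m) := ⟨fun T => ⟨m ⊔ sSup ((↑) '' T), le_sup_left⟩⟩
    have hval : ∀ T : Set (Set.Ici m), ((sSup T : Set.Ici m) : M) = m ⊔ sSup ((↑) '' T) :=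
      fun T => rfl
    letI iCL : CompleteLattice (Set.Ici m) := completeLatticeOfSup _ (fun T => by
      constructor
      · rintro ⟨y, hy⟩ hyT
        show y ≤ m ⊔ sSup ((↑) '' T)
        exact le_sup_of_le_right (le_sSup ⟨⟨y, hy⟩, hyT, rfl⟩)
      · rintro ⟨y, hy⟩ hyub
        show m ⊔ sSup ((↑) '' T) ≤ y
        refine sup_le hy (sSup_le ?_)
        rintro z ⟨⟨z, hz⟩, hzT, rfl⟩
        exact hyub hzT)
    have hbot : ((@Bot.bot (Set.Ici m) iCL.toBot : Set.Ici m) : M) = m := by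
      have : ((@Bot.bot (Set.Ici m) iCL.toBot : Set.Ici m) : M) = m ⊔ sSup ((↑) '' (∅ : Set (Set.Ici m))) := rfl
      simp [this]
    refine ⟨Set.Ici m, iCL, fun x => ⟨m ⊔ x, le_sup_left⟩, ?_, ?_⟩
    · intro S
      apply Subtype.ext
      rw [hval, ← Set.image_comp]
      show m ⊔ sSup S = m ⊔ sSup ((fun x => m ⊔ x) '' S)
      apply le_antisymm
      · apply sup_le le_sup_left
        refine le_sup_of_le_right (sSup_le fun s hs => ?_)
        exact le_trans le_sup_right (le_sSup ⟨s, hs, rfl⟩)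
      · refine sup_le le_sup_left (sSup_le ?_)
        rintro z ⟨s, hs, rfl⟩
        exact sup_le le_sup_left (le_sup_of_le_right (le_sSup hs))
    · rw [hrange]
      ext x
      simp only [Set.mem_Iic, Set.mem_setOf_eq]
      constructor
      · intro hx
        apply Subtype.ext
        rw [hbot]
        show m ⊔ x = m
        exact sup_eq_left.mpr hx
      · intro hx
        have h2 : m ⊔ x = m := by
          have := congrArg Subtype.val hx
          rwa [hbot] at this
        calc x ≤ m ⊔ x := le_sup_right
        _ = m := h2
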